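/- arXiv:2112.07806 — 2 statements merged into one kernel-verified Lean document; each statement's English description precedes it below -/
import Mathlib

section
/- Let Φ ∈ ℝ^{n×d} be full column rank with largest singular value σ_max, y ∈ ℝ^n, and run gradient descent w_{t+1} = w_t − η Φᵀ(Φw_t − y) with w₀ = 0 and 0 < η < 1/σ_max². Define Alignment(Φ, y, τ) = Σ_{i: σᵢ ≥ τ} (uᵢᵀy)². If Alignment(Φ, y, τ) = δ for some 0 < τ ≤ σ_max and 0 ≤ ω < δ, then for any t ≥ −log(1 − ω/δ)/(2ητ²), the loss reduction satisfies ‖Φw₀ − y‖² − ‖Φw_t − y‖² ≥ ω. -/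
open Matrix Finset

lemma orth_sum_sq (n : ℕ) (U : Matrix (Fin n) (Fin n) ℝ) (hU2 : U * Uᵀ = 1) (x : Fin n → ℝ) :
    ∑ i, (Uᵀ.mulVec x) i ^ 2 = ∑ i, x i ^ 2 := by
  have h : (Uᵀ.mulVec x) ⬝ᵥ (Uᵀ.mulVec x) = x ⬝ᵥ x := by
    rw [Matrix.dotProduct_mulVec, Matrix.vecMul_transpose, Matrix.mulVec_mulVec, hU2,
      Matrix.one_mulVec]
  simpa [dotProduct, sq] using h

set_option maxHeartbeats 2000000 in
/-- If `Alignment(Φ,y,τ) = δ` then after `t ≥ −log(1−ω/δ)/(2ητ²)` iterations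
gradient descent has reduced the loss by at least `ω`. -/
theorem gd_alignment_loss_reduction
    (n d : ℕ) (hdn : d ≤ n)
    (Φ : Matrix (Fin n) (Fin d) ℝ)
    (U : Matrix (Fin n) (Fin n) ℝ) (V : Matrix (Fin d) (Fin d) ℝ)
    (σ : Fin d → ℝ)
    (hU1 : Uᵀ * U = 1) (hU2 : U * Uᵀ = 1)
    (hV1 : Vᵀ * V = 1) (hV2 : V * Vᵀ = 1)
    (hΦ : Φ = U * (Matrix.of fun (i : Fin n) (j : Fin d) =>
        if (i : ℕ) = (j : ℕ) then σ j else 0) * Vᵀ)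
    (hdesc : ∀ i j : Fin d, i ≤ j → σ j ≤ σ i)
    (hσpos : ∀ i : Fin d, 0 < σ i)
    (σmax : ℝ) (hσmax : IsGreatest (Set.range σ) σmax)
    (η : ℝ) (hη0 : 0 < η) (hη : η < 1 / σmax ^ 2)
    (y : Fin n → ℝ)
    (w : ℕ → Fin d → ℝ) (hw0 : w 0 = 0)
    (hw : ∀ t, w (t + 1) = w t - η • (Φᵀ.mulVec (Φ.mulVec (w t) - y)))
    (τ δ ω : ℝ) (hτ0 : 0 < τ) (hτmax : τ ≤ σmax)
    (hδ : (∑ i ∈ Finset.univ.filter (fun i : Fin d => τ ≤ σ i),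
        ((Uᵀ.mulVec y) (Fin.castLE hdn i)) ^ 2) = δ)
    (hω0 : 0 ≤ ω) (hωδ : ω < δ) :
    ∀ t : ℕ, (t : ℝ) ≥ -Real.log (1 - ω / δ) / (2 * η * τ ^ 2) →
      (∑ i, (Φ.mulVec (w 0) - y) i ^ 2) - ∑ i, (Φ.mulVec (w t) - y) i ^ 2 ≥ ω := by
  -- basic positivity facts
  obtain ⟨⟨k, hk⟩, hub⟩ := hσmax
  have hσmax0 : 0 < σmax := hk ▸ hσpos k
  have hησmax : η * σmax ^ 2 < 1 := by
    rw [lt_div_iff₀ (by positivity)] at hη; linarith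
  have hδ0 : 0 < δ := lt_of_le_of_lt hω0 hωδ
  -- the diagonal matrix
  set S : Matrix (Fin n) (Fin d) ℝ := Matrix.of fun (i : Fin n) (j : Fin d) =>
      if (i : ℕ) = (j : ℕ) then σ j else 0 with hSdef
  have hS : ∀ (u : Fin d → ℝ) (i : Fin n),
      (S.mulVec u) i = if h : (i : ℕ) < d then σ ⟨i, h⟩ * u ⟨i, h⟩ else 0 := by
    intro u i
    by_cases h : (i : ℕ) < d
    · have hne : ∀ j : Fin d, j ≠ ⟨(i : ℕ), h⟩ → S i j * u j = 0 := by
        intro j hj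
        have hij : (i : ℕ) ≠ (j : ℕ) := by
          intro hc; exact hj (by ext; exact hc.symm)
        simp [hSdef, hij]
      rw [Matrix.mulVec, dotProduct, Fintype.sum_eq_single _ hne, dif_pos h]
      simp [hSdef]
    · rw [dif_neg h, Matrix.mulVec, dotProduct]
      apply Finset.sum_eq_zero
      intro j _
      have hij : (i : ℕ) ≠ (j : ℕ) := by
        intro hc; exact h (hc ▸ j.2)
      simp [hSdef, hij]
  have hST : ∀ (v : Fin n → ℝ) (j : Fin d),
      (Sᵀ.mulVec v) j = σ j * v (Fin.castLE hdn j) := by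
    intro v j
    have hne : ∀ k : Fin n, k ≠ Fin.castLE hdn j → Sᵀ j k * v k = 0 := by
      intro k hk
      have hkj : (k : ℕ) ≠ (j : ℕ) := by
        intro hc; exact hk (by ext; exact hc)
      simp [hSdef, Matrix.transpose_apply, hkj]
    rw [Matrix.mulVec, dotProduct, Fintype.sum_eq_single _ hne]
    simp [hSdef, Fin.castLE]
  -- eigenvalues of S Sᵀ
  set sq : Fin n → ℝ := fun i => if h : (i : ℕ) < d then σ ⟨i, h⟩ ^ 2 else 0 with hsqdef
  have hsq_apply : ∀ i : Fin n, sq i = if h : (i : ℕ) < d then σ ⟨i, h⟩ ^ 2 else 0 :=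
    fun i => rfl
  have hSS : ∀ (v : Fin n → ℝ) (i : Fin n), ((S * Sᵀ).mulVec v) i = sq i * v i := by
    intro v i
    rw [← Matrix.mulVec_mulVec, hS, hsq_apply]
    by_cases h : (i : ℕ) < d
    · rw [dif_pos h, dif_pos h, hST]
      have : Fin.castLE hdn ⟨(i : ℕ), h⟩ = i := by ext; simp [Fin.castLE]
      rw [this]; ring
    · rw [dif_neg h, dif_neg h, zero_mul]
  -- matrix identity Uᵀ (Φ Φᵀ) = (S Sᵀ) Uᵀ
  have hcancel : ∀ X : Matrix (Fin d) (Fin n) ℝ, Vᵀ * (V * X) = X := by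
    intro X; rw [← Matrix.mul_assoc, hV1, Matrix.one_mul]
  have hcancelU : ∀ X : Matrix (Fin n) (Fin n) ℝ, Uᵀ * (U * X) = X := by
    intro X; rw [← Matrix.mul_assoc, hU1, Matrix.one_mul]
  have hUΦΦ : Uᵀ * (Φ * Φᵀ) = (S * Sᵀ) * Uᵀ := by
    rw [hΦ]
    simp only [Matrix.transpose_mul, Matrix.transpose_transpose, ← hSdef]
    simp only [Matrix.mul_assoc]
    rw [hcancelU, hcancel]
  -- the residual in the U basis
  set z : ℕ → Fin n → ℝ := fun t => Uᵀ.mulVec (Φ.mulVec (w t) - y) with hzdef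
  set c : Fin n → ℝ := fun i => 1 - η * sq i with hcdef
  have hc_apply : ∀ i : Fin n, c i = 1 - η * sq i := fun i => rfl
  have hz_apply : ∀ t, z t = Uᵀ.mulVec (Φ.mulVec (w t) - y) := fun t => rfl
  have hrec : ∀ t i, z (t + 1) i = c i * z t i := by
    intro t i
    have h1 : Φ.mulVec (w (t + 1)) - y
        = (Φ.mulVec (w t) - y) - η • ((Φ * Φᵀ).mulVec (Φ.mulVec (w t) - y)) := by
      rw [hw t, Matrix.mulVec_sub, Matrix.mulVec_smul, Matrix.mulVec_mulVec]
      ext j; simp; ring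
    have h2 : Uᵀ.mulVec ((Φ * Φᵀ).mulVec (Φ.mulVec (w t) - y)) = (S * Sᵀ).mulVec (z t) := by
      rw [Matrix.mulVec_mulVec, hUΦΦ, ← Matrix.mulVec_mulVec, ← hz_apply]
    have h3 : z (t + 1) = z t - η • ((S * Sᵀ).mulVec (z t)) := by
      rw [hz_apply, h1, Matrix.mulVec_sub, Matrix.mulVec_smul, h2, ← hz_apply]
    have h4 := congrFun h3 i
    rw [h4, Pi.sub_apply, Pi.smul_apply, smul_eq_mul, hSS, hc_apply]
    ring
  have hzt : ∀ t i, z t i = c i ^ t * z 0 i := by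
    intro t
    induction t with
    | zero => intro i; simp
    | succ t ih =>
      intro i
      rw [hrec t i, ih i, pow_succ]; ring
  -- loss in terms of z
  have hloss : ∀ t, ∑ i, (Φ.mulVec (w t) - y) i ^ 2 = ∑ i, z t i ^ 2 := by
    intro t
    exact (orth_sum_sq n U hU2 _).symm
  set q : Fin n → ℝ := fun i => (Uᵀ.mulVec y) i ^ 2 with hqdef
  have hq_apply : ∀ i : Fin n, q i = (Uᵀ.mulVec y) i ^ 2 := fun i => rfl
  have hz0 : ∀ i, z 0 i ^ 2 = q i := by
    intro i
    rw [hq_apply]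
    show (Uᵀ.mulVec (Φ.mulVec (w 0) - y)) i ^ 2 = _
    simp [hw0, Matrix.mulVec_zero, zero_sub, Matrix.mulVec_neg]
  -- bounds on c
  have hsq_nonneg : ∀ i, 0 ≤ sq i := by
    intro i; rw [hsq_apply]; split <;> positivity
  have hsq_le : ∀ i, sq i ≤ σmax ^ 2 := by
    intro i; rw [hsq_apply]
    split
    · next h =>
      have h1 := hub ⟨⟨(i : ℕ), h⟩, rfl⟩
      have h2 := hσpos ⟨(i : ℕ), h⟩
      nlinarith
    · positivity
  have hc_nonneg : ∀ i, 0 ≤ c i := by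
    intro i; rw [hc_apply]
    have := hsq_le i
    nlinarith [hη0.le]
  have hc_le_one : ∀ i, c i ≤ 1 := by
    intro i; rw [hc_apply]
    have := hsq_nonneg i
    nlinarith [hη0.le]
  intro t ht
  -- rewrite the loss reduction
  have hkey : (∑ i, (Φ.mulVec (w 0) - y) i ^ 2) - ∑ i, (Φ.mulVec (w t) - y) i ^ 2
      = ∑ i, (1 - (c i ^ t) ^ 2) * q i := by
    rw [hloss 0, hloss t, ← Finset.sum_sub_distrib]
    apply Finset.sum_congr rfl
    intro i _
    rw [hzt t i, mul_pow, hz0 i]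
    ring
  rw [hkey]
  -- nonnegativity of each term
  have hterm_nonneg : ∀ i : Fin n, 0 ≤ (1 - (c i ^ t) ^ 2) * q i := by
    intro i
    have h1 : c i ^ t ≤ 1 := pow_le_one₀ (hc_nonneg i) (hc_le_one i)
    have h2 : 0 ≤ c i ^ t := pow_nonneg (hc_nonneg i) t
    have h3 : (c i ^ t) ^ 2 ≤ 1 := by nlinarith
    have h4 : 0 ≤ q i := by rw [hq_apply]; positivity
    nlinarith
  -- the contraction factor
  have hτσ : τ ^ 2 ≤ σmax ^ 2 := pow_le_pow_left₀ hτ0.le hτmax 2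
  have hητ1 : η * τ ^ 2 < 1 :=
    lt_of_le_of_lt (mul_le_mul_of_nonneg_left hτσ hη0.le) hησmax
  have hητ0 : 0 ≤ η * τ ^ 2 := by positivity
  set ρ : ℝ := 1 - η * τ ^ 2 with hρdef
  have hρ0 : 0 ≤ ρ := by rw [hρdef]; linarith
  have hρ1 : ρ ≤ 1 := by rw [hρdef]; linarith
  -- restriction to good indices
  set T : Finset (Fin n) :=
    (Finset.univ.filter (fun i : Fin d => τ ≤ σ i)).image (Fin.castLE hdn) with hTdef
  have hinj : Set.InjOn (Fin.castLE hdn) ↑(Finset.univ.filter (fun i : Fin d => τ ≤ σ i)) := by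
    intro a _ b _ hab
    exact Fin.castLE_injective hdn hab
  have hsub : ∑ i ∈ T, (1 - (c i ^ t) ^ 2) * q i ≤ ∑ i, (1 - (c i ^ t) ^ 2) * q i := by
    apply Finset.sum_le_sum_of_subset_of_nonneg (Finset.subset_univ T)
    intro i _ _; exact hterm_nonneg i
  have himg : ∑ i ∈ T, (1 - (c i ^ t) ^ 2) * q i
      = ∑ j ∈ Finset.univ.filter (fun i : Fin d => τ ≤ σ i),
          (1 - (c (Fin.castLE hdn j) ^ t) ^ 2) * q (Fin.castLE hdn j) := by
    rw [hTdef, Finset.sum_image (fun a ha b hb hab => hinj ha hb hab)]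
  -- on good indices, c ≤ ρ
  have hcρ : ∀ j : Fin d, τ ≤ σ j → c (Fin.castLE hdn j) ≤ ρ := by
    intro j hj
    have hjd : ((Fin.castLE hdn j : Fin n) : ℕ) < d := j.2
    have hmk : (⟨((Fin.castLE hdn j : Fin n) : ℕ), hjd⟩ : Fin d) = j := by
      ext; simp [Fin.castLE]
    have hsqj : sq (Fin.castLE hdn j) = σ j ^ 2 := by
      rw [hsq_apply, dif_pos hjd, hmk]
    have hmul : η * τ ^ 2 ≤ η * σ j ^ 2 :=
      mul_le_mul_of_nonneg_left (pow_le_pow_left₀ hτ0.le hj 2) hη0.le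
    rw [hc_apply, hsqj, hρdef]
    linarith
  -- lower bound each good term
  have hbound : ∀ j ∈ Finset.univ.filter (fun i : Fin d => τ ≤ σ i),
      (1 - (ρ ^ t) ^ 2) * q (Fin.castLE hdn j)
        ≤ (1 - (c (Fin.castLE hdn j) ^ t) ^ 2) * q (Fin.castLE hdn j) := by
    intro j hj
    rw [Finset.mem_filter] at hj
    have h1 : c (Fin.castLE hdn j) ^ t ≤ ρ ^ t :=
      pow_le_pow_left₀ (hc_nonneg _) (hcρ j hj.2) t
    have h2 : 0 ≤ c (Fin.castLE hdn j) ^ t := pow_nonneg (hc_nonneg _) t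
    have h3 : (c (Fin.castLE hdn j) ^ t) ^ 2 ≤ (ρ ^ t) ^ 2 := by nlinarith
    have h4 : 0 ≤ q (Fin.castLE hdn j) := by rw [hq_apply]; positivity
    nlinarith
  have hsum_lb : (1 - (ρ ^ t) ^ 2) * δ
      ≤ ∑ j ∈ Finset.univ.filter (fun i : Fin d => τ ≤ σ i),
          (1 - (c (Fin.castLE hdn j) ^ t) ^ 2) * q (Fin.castLE hdn j) := by
    calc (1 - (ρ ^ t) ^ 2) * δ
        = ∑ j ∈ Finset.univ.filter (fun i : Fin d => τ ≤ σ i),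
            (1 - (ρ ^ t) ^ 2) * q (Fin.castLE hdn j) := by
          rw [← Finset.mul_sum]
          simp only [hq_apply]
          rw [hδ]
      _ ≤ _ := Finset.sum_le_sum hbound
  -- analytic bound : (ρ^t)^2 ≤ 1 - ω/δ
  have hωδ1 : 0 < 1 - ω / δ := by
    rw [sub_pos, div_lt_one hδ0]; exact hωδ
  have hexp : ρ ≤ Real.exp (-(η * τ ^ 2)) := by
    have := Real.add_one_le_exp (-(η * τ ^ 2))
    rw [hρdef]; linarith
  have hρt : (ρ ^ t) ^ 2 ≤ Real.exp (-(2 * η * τ ^ 2) * t) := by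
    have h1 : (ρ ^ t) ^ 2 ≤ (Real.exp (-(η * τ ^ 2)) ^ t) ^ 2 := by
      have := pow_le_pow_left₀ hρ0 hexp t
      nlinarith [pow_nonneg hρ0 t, pow_nonneg (Real.exp_nonneg (-(η * τ ^ 2))) t]
    calc (ρ ^ t) ^ 2 ≤ (Real.exp (-(η * τ ^ 2)) ^ t) ^ 2 := h1
      _ = Real.exp (-(2 * η * τ ^ 2) * t) := by
          rw [← Real.exp_nat_mul, ← Real.exp_nat_mul]
          congr 1
          push_cast
          ring
  have h2ητ : 0 < 2 * η * τ ^ 2 := by positivity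
  have hexp_le : Real.exp (-(2 * η * τ ^ 2) * t) ≤ 1 - ω / δ := by
    rw [← Real.exp_log hωδ1, Real.exp_le_exp]
    rw [ge_iff_le, div_le_iff₀ h2ητ] at ht
    nlinarith
  have hfinal : (1 - (ρ ^ t) ^ 2) * δ ≥ ω := by
    have h5 : (ρ ^ t) ^ 2 ≤ 1 - ω / δ := le_trans hρt hexp_le
    have : ω / δ * δ = ω := div_mul_cancel₀ ω (ne_of_gt hδ0)
    nlinarith
  calc ω ≤ (1 - (ρ ^ t) ^ 2) * δ := hfinal
    _ ≤ ∑ j ∈ Finset.univ.filter (fun i : Fin d => τ ≤ σ i),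
          (1 - (c (Fin.castLE hdn j) ^ t) ^ 2) * q (Fin.castLE hdn j) := hsum_lb
    _ = ∑ i ∈ T, (1 - (c i ^ t) ^ 2) * q i := himg.symm
    _ ≤ ∑ i, (1 - (c i ^ t) ^ 2) * q i := hsub
end

section
/- Under the gradient descent setup with w₀ = 0, 0 < η < 1/σ_max², and Alignment(Φ, y, τ) = δ for 0 < τ ≤ σ_max, the reduction in loss after t iterations satisfies ℓ(w₀) − ℓ(w_t) ≥ δ(1 − (1 − ητ²)^{2t}) ≥ δ(1 − exp(−2tητ²)). -/
open Matrix Finset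

/-- Loss reduction after `t` iterations of gradient descent is at least
`δ(1 − (1 − ητ²)^{2t}) ≥ δ(1 − exp(−2tητ²))` where `δ = Alignment(Φ,y,τ)`. -/
theorem gd_alignment_loss_reduction_rate
    (n d : ℕ) (hdn : d ≤ n)
    (Φ : Matrix (Fin n) (Fin d) ℝ)
    (U : Matrix (Fin n) (Fin n) ℝ) (V : Matrix (Fin d) (Fin d) ℝ)
    (σ : Fin d → ℝ)
    (hU1 : Uᵀ * U = 1) (hU2 : U * Uᵀ = 1)
    (hV1 : Vᵀ * V = 1) (hV2 : V * Vᵀ = 1)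
    (hΦ : Φ = U * (Matrix.of fun (i : Fin n) (j : Fin d) =>
        if (i : ℕ) = (j : ℕ) then σ j else 0) * Vᵀ)
    (hdesc : ∀ i j : Fin d, i ≤ j → σ j ≤ σ i)
    (hσpos : ∀ i : Fin d, 0 < σ i)
    (σmax : ℝ) (hσmax : IsGreatest (Set.range σ) σmax)
    (η : ℝ) (hη0 : 0 < η) (hη : η < 1 / σmax ^ 2)
    (y : Fin n → ℝ)
    (w : ℕ → Fin d → ℝ) (hw0 : w 0 = 0)
    (hw : ∀ t, w (t + 1) = w t - η • (Φᵀ.mulVec (Φ.mulVec (w t) - y)))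
    (τ δ : ℝ) (hτ0 : 0 < τ) (hτmax : τ ≤ σmax)
    (hδ : (∑ i ∈ Finset.univ.filter (fun i : Fin d => τ ≤ σ i),
        ((Uᵀ.mulVec y) (Fin.castLE hdn i)) ^ 2) = δ) :
    ∀ t : ℕ,
      ((∑ i, (Φ.mulVec (w 0) - y) i ^ 2) - ∑ i, (Φ.mulVec (w t) - y) i ^ 2
          ≥ δ * (1 - (1 - η * τ ^ 2) ^ (2 * t))) ∧
      δ * (1 - (1 - η * τ ^ 2) ^ (2 * t))
          ≥ δ * (1 - Real.exp (-(2 * (t : ℝ) * η * τ ^ 2))) := by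
  intro t
  have hσmaxpos : 0 < σmax := lt_of_lt_of_le hτ0 hτmax
  have hη1 : η * σmax ^ 2 < 1 := by
    rw [lt_div_iff₀ (pow_pos hσmaxpos 2)] at hη; linarith
  set S : Matrix (Fin n) (Fin d) ℝ :=
    Matrix.of fun (i : Fin n) (j : Fin d) => if (i : ℕ) = (j : ℕ) then σ j else 0 with hSdef
  set coef : Fin n → ℝ :=
    fun i => if h : (i : ℕ) < d then 1 - η * σ ⟨i, h⟩ ^ 2 else 1 with hcdef
  have hSapp : ∀ (i : Fin n) (k : Fin d),
      S i k = if (i : ℕ) = (k : ℕ) then σ k else 0 := fun i k => rfl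
  -- Φ Φᵀ = U (S Sᵀ) Uᵀ
  have hΦΦ : Φ * Φᵀ = U * (S * Sᵀ) * Uᵀ := by
    have h1 : Vᵀ * (V * (Sᵀ * Uᵀ)) = Sᵀ * Uᵀ := by
      rw [← Matrix.mul_assoc, hV1, Matrix.one_mul]
    rw [hΦ]
    simp only [Matrix.transpose_mul, Matrix.transpose_transpose, Matrix.mul_assoc, h1]
  -- entries of S Sᵀ
  have hSS : ∀ i j : Fin n, (S * Sᵀ) i j =
      if h : (i : ℕ) < d then (if (j : ℕ) = (i : ℕ) then σ ⟨i, h⟩ ^ 2 else 0) else 0 := by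
    intro i j
    by_cases h : (i : ℕ) < d
    · rw [dif_pos h, Matrix.mul_apply]
      rw [Finset.sum_eq_single (⟨(i : ℕ), h⟩ : Fin d)]
      · rw [Matrix.transpose_apply, hSapp, hSapp]
        simp only [if_pos rfl]
        by_cases hj : (j : ℕ) = (i : ℕ)
        · simp [hj, sq]
        · simp [hj]
      · intro k _ hk
        have : (i : ℕ) ≠ (k : ℕ) := by
          intro he; exact hk (by apply Fin.ext; simp [← he])
        rw [hSapp, if_neg this, zero_mul]
      · intro hmem; exact absurd (Finset.mem_univ _) hmem
    · rw [dif_neg h, Matrix.mul_apply]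
      apply Finset.sum_eq_zero; intro k _
      have hk : (k : ℕ) < d := k.isLt
      rw [hSapp, if_neg (by omega), zero_mul]
  -- mulVec of S Sᵀ
  have hMcomp : ∀ (v : Fin n → ℝ) (i : Fin n),
      (S * Sᵀ).mulVec v i = (if h : (i : ℕ) < d then σ ⟨i, h⟩ ^ 2 else 0) * v i := by
    intro v i
    simp only [Matrix.mulVec, dotProduct, hSS]
    by_cases h : (i : ℕ) < d
    · simp only [dif_pos h]
      have hiff : ∀ j : Fin n, ((j : ℕ) = (i : ℕ)) ↔ j = i := by
        intro j; exact Fin.val_inj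
      rw [Finset.sum_congr rfl (fun j _ => by rw [if_congr (hiff j) rfl rfl])]
      simp [Finset.sum_ite_eq']
    · simp [dif_neg h]
  -- residual recurrence
  have hrrec : ∀ s, Φ.mulVec (w (s + 1)) - y =
      (Φ.mulVec (w s) - y) - η • (Φ * Φᵀ).mulVec (Φ.mulVec (w s) - y) := by
    intro s
    rw [hw s, Matrix.mulVec_sub, Matrix.mulVec_smul, Matrix.mulVec_mulVec]
    abel
  -- z recurrence
  have hzrec : ∀ s (i : Fin n), Uᵀ.mulVec (Φ.mulVec (w (s + 1)) - y) i =
      coef i * Uᵀ.mulVec (Φ.mulVec (w s) - y) i := by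
    intro s i
    have h2 : Uᵀ.mulVec (Φ.mulVec (w (s + 1)) - y) =
        Uᵀ.mulVec (Φ.mulVec (w s) - y)
          - η • (S * Sᵀ).mulVec (Uᵀ.mulVec (Φ.mulVec (w s) - y)) := by
      rw [hrrec s, Matrix.mulVec_sub, Matrix.mulVec_smul]
      congr 1
      rw [Matrix.mulVec_mulVec, Matrix.mulVec_mulVec, hΦΦ,
        ← Matrix.mul_assoc, ← Matrix.mul_assoc, hU1, Matrix.one_mul,
        ← Matrix.mulVec_mulVec]
    rw [h2]
    simp only [Pi.sub_apply, Pi.smul_apply, smul_eq_mul, hMcomp]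
    by_cases h : (i : ℕ) < d
    · simp only [hcdef, dif_pos h]; ring
    · simp only [hcdef, dif_neg h]; ring
  -- closed form
  have hzt : ∀ s (i : Fin n), Uᵀ.mulVec (Φ.mulVec (w s) - y) i =
      coef i ^ s * (-(Uᵀ.mulVec y i)) := by
    intro s
    induction s with
    | zero =>
      intro i
      simp [hw0, Matrix.mulVec_zero, zero_sub, Matrix.mulVec_neg]
    | succ s ih =>
      intro i
      rw [hzrec s i, ih i]; ring
  -- loss in rotated coordinates
  have hloss : ∀ v : Fin n → ℝ, ∑ i, (Uᵀ.mulVec v) i ^ 2 = ∑ i, v i ^ 2 := by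
    intro v
    have h1 : (Uᵀ.mulVec v) ⬝ᵥ (Uᵀ.mulVec v) = v ⬝ᵥ v := by
      rw [Matrix.dotProduct_mulVec, Matrix.vecMul_transpose, Matrix.mulVec_mulVec,
        hU2, Matrix.one_mulVec]
    simpa [dotProduct, sq] using h1
  -- coef bounds
  have hσle : ∀ i : Fin d, σ i ≤ σmax := fun i => hσmax.2 (Set.mem_range_self i)
  have hcoef0 : ∀ i : Fin n, 0 ≤ coef i := by
    intro i
    by_cases h : (i : ℕ) < d
    · simp only [hcdef, dif_pos h]
      have h1 : σ ⟨i, h⟩ ^ 2 ≤ σmax ^ 2 :=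
        pow_le_pow_left₀ (le_of_lt (hσpos _)) (hσle _) 2
      nlinarith
    · simp [hcdef, dif_neg h]
  have hcoef1 : ∀ i : Fin n, coef i ≤ 1 := by
    intro i
    by_cases h : (i : ℕ) < d
    · simp only [hcdef, dif_pos h]
      nlinarith [sq_nonneg (σ ⟨i, h⟩), hσpos (⟨i, h⟩ : Fin d)]
    · simp [hcdef, dif_neg h]
  have ha0 : 0 ≤ 1 - η * τ ^ 2 := by
    have : τ ^ 2 ≤ σmax ^ 2 := pow_le_pow_left₀ hτ0.le hτmax 2
    nlinarith
  have ha1 : 1 - η * τ ^ 2 ≤ 1 := by nlinarith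
  have hδ0 : 0 ≤ δ := by
    rw [← hδ]; exact Finset.sum_nonneg fun i _ => sq_nonneg _
  constructor
  · -- main bound
    have hL : (∑ i, (Φ.mulVec (w 0) - y) i ^ 2) - ∑ i, (Φ.mulVec (w t) - y) i ^ 2
        = ∑ i, (1 - coef i ^ (2 * t)) * (Uᵀ.mulVec y i) ^ 2 := by
      rw [← hloss (Φ.mulVec (w 0) - y), ← hloss (Φ.mulVec (w t) - y), ← Finset.sum_sub_distrib]
      apply Finset.sum_congr rfl
      intro i _
      rw [hzt 0 i, hzt t i]
      rw [pow_mul]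
      ring
    rw [hL]
    set F : Finset (Fin d) := Finset.univ.filter (fun i : Fin d => τ ≤ σ i) with hF
    have hsub : F.image (Fin.castLE hdn) ⊆ Finset.univ := Finset.subset_univ _
    have hterm_nonneg : ∀ i : Fin n, 0 ≤ (1 - coef i ^ (2 * t)) * (Uᵀ.mulVec y i) ^ 2 := by
      intro i
      apply mul_nonneg _ (sq_nonneg _)
      have : coef i ^ (2 * t) ≤ 1 := pow_le_one₀ (hcoef0 i) (hcoef1 i)
      linarith
    have h1 : ∑ i ∈ F.image (Fin.castLE hdn), (1 - coef i ^ (2 * t)) * (Uᵀ.mulVec y i) ^ 2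
        ≤ ∑ i, (1 - coef i ^ (2 * t)) * (Uᵀ.mulVec y i) ^ 2 :=
      Finset.sum_le_sum_of_subset_of_nonneg hsub (fun i _ _ => hterm_nonneg i)
    rw [Finset.sum_image (fun a _ b _ hab => Fin.castLE_injective hdn hab)] at h1
    have h2 : δ * (1 - (1 - η * τ ^ 2) ^ (2 * t))
        ≤ ∑ i ∈ F, (1 - coef (Fin.castLE hdn i) ^ (2 * t)) * (Uᵀ.mulVec y (Fin.castLE hdn i)) ^ 2 := by
      rw [← hδ, Finset.sum_mul]
      apply Finset.sum_le_sum
      intro i hi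
      rw [Finset.mem_filter] at hi
      have hτi : τ ≤ σ i := hi.2
      have hid : ((Fin.castLE hdn i : Fin n) : ℕ) < d := by simp [i.isLt]
      have hcoefval : coef (Fin.castLE hdn i) = 1 - η * σ i ^ 2 := by
        simp only [hcdef, dif_pos hid]
        congr 1
      have hci : coef (Fin.castLE hdn i) ≤ 1 - η * τ ^ 2 := by
        rw [hcoefval]
        have : τ ^ 2 ≤ σ i ^ 2 := pow_le_pow_left₀ hτ0.le hτi 2
        nlinarith
      have hp : coef (Fin.castLE hdn i) ^ (2 * t) ≤ (1 - η * τ ^ 2) ^ (2 * t) :=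
        pow_le_pow_left₀ (hcoef0 _) hci _
      have := sq_nonneg (Uᵀ.mulVec y (Fin.castLE hdn i))
      rw [mul_comm ((Uᵀ.mulVec y (Fin.castLE hdn i)) ^ 2)]
      apply mul_le_mul_of_nonneg_right _ this
      linarith
    linarith
  · -- exp bound
    have hexp : (1 - η * τ ^ 2) ^ (2 * t) ≤ Real.exp (-(2 * (t : ℝ) * η * τ ^ 2)) := by
      calc (1 - η * τ ^ 2) ^ (2 * t)
          ≤ Real.exp (-(η * τ ^ 2)) ^ (2 * t) := by
            apply pow_le_pow_left₀ ha0
            have := Real.add_one_le_exp (-(η * τ ^ 2))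
            linarith
        _ = Real.exp ((2 * t : ℕ) * -(η * τ ^ 2)) := (Real.exp_nat_mul _ _).symm
        _ = Real.exp (-(2 * (t : ℝ) * η * τ ^ 2)) := by push_cast; ring_nf
    have := mul_le_mul_of_nonneg_left (sub_le_sub_left hexp 1) hδ0
    linarith [mul_le_mul_of_nonneg_left (sub_le_sub_left hexp 1) hδ0]
end
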